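/- Fix δ ∈ (0,1), γ ≥ 5 and λ > e³/δ, and set C₂ = 3·max{γ + 1 + log λ, λe³}. Let (r₁, a₁, d₁) and (r₂, a₂, d₂) be admissible triples with d₂ ≤ d₁, and suppose the open intervals U_{r₁}(a₁) and U_{r₂}(a₂) intersect. Then U_{r₂}(a₂) ⊆ U_{r₁^{C₂}}(a₁), i.e. (log(a₂/r₂), log(a₂ r₂)) ⊆ (log a₁ − C₂ log r₁, log a₁ + C₂ log r₁). -/
import Mathlib


/-- Admissibility of a triple `(r, a, d)` of positive reals with `r > 1`, relative to
parameters `γ, λ`: either (large case) `r > e` and `a r² ≤ d ≤ λ a r^γ`, or (small case)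
`1 < r ≤ e` and `a e² log r ≤ d ≤ λ a e² log r`. -/
def Admissible (γ lam r a d : ℝ) : Prop :=
  (Real.exp 1 < r ∧ a * r ^ (2 : ℕ) ≤ d ∧ d ≤ lam * a * r ^ γ) ∨
  (1 < r ∧ r ≤ Real.exp 1 ∧ a * Real.exp 2 * Real.log r ≤ d ∧
    d ≤ lam * a * Real.exp 2 * Real.log r)

/-- if `(r₁,a₁,d₁)` and `(r₂,a₂,d₂)` are admissible triples with `d₂ ≤ d₁`
whose intervals `U_{r₁}(a₁)` and `U_{r₂}(a₂)` intersect, then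
`U_{r₂}(a₂) ⊆ (log a₁ − C₂ log r₁, log a₁ + C₂ log r₁)`,
where `C₂ = 3 max{γ + 1 + log λ, λ e³}`. -/
theorem intersecting_admissible_intervals (δ γ lam : ℝ) (hδ₀ : 0 < δ) (hδ₁ : δ < 1)
    (hγ : 5 ≤ γ) (hlam : Real.exp 3 / δ < lam)
    (r₁ a₁ d₁ r₂ a₂ d₂ : ℝ) (ha₁ : 0 < a₁) (ha₂ : 0 < a₂) (hd₁ : 0 < d₁) (hd₂ : 0 < d₂)
    (h₁ : Admissible γ lam r₁ a₁ d₁) (h₂ : Admissible γ lam r₂ a₂ d₂)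
    (hd : d₂ ≤ d₁)
    (hint : (Set.Ioo (Real.log (a₁ / r₁)) (Real.log (a₁ * r₁)) ∩
      Set.Ioo (Real.log (a₂ / r₂)) (Real.log (a₂ * r₂))).Nonempty) :
    Set.Ioo (Real.log (a₂ / r₂)) (Real.log (a₂ * r₂)) ⊆
      Set.Ioo (Real.log a₁ - 3 * max (γ + 1 + Real.log lam) (lam * Real.exp 3) * Real.log r₁)
        (Real.log a₁ + 3 * max (γ + 1 + Real.log lam) (lam * Real.exp 3) * Real.log r₁) := by
  set M := max (γ + 1 + Real.log lam) (lam * Real.exp 3) with hM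
  have he : (1:ℝ) < Real.exp 1 := by have := Real.add_one_le_exp (1:ℝ); linarith
  have he3 : (4:ℝ) ≤ Real.exp 3 := by have := Real.add_one_le_exp (3:ℝ); linarith
  have hlam3 : Real.exp 3 < lam := by
    have h : Real.exp 3 ≤ Real.exp 3 / δ := by
      rw [le_div_iff₀ hδ₀]; nlinarith [Real.exp_pos 3]
    linarith
  have hlampos : (0:ℝ) < lam := by linarith
  have hloglam : 3 < Real.log lam := (Real.lt_log_iff_exp_lt hlampos).mpr hlam3
  have hM1 : γ + 1 + Real.log lam ≤ M := le_max_left _ _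
  have hM2 : lam * Real.exp 3 ≤ M := le_max_right _ _
  have hM9 : (9:ℝ) ≤ M := by linarith
  have hlame3 : (16:ℝ) ≤ lam * Real.exp 3 := by nlinarith
  have hee : Real.exp 2 * Real.exp 1 = Real.exp 3 := by rw [← Real.exp_add]; norm_num
  have hee2 : Real.exp 1 * Real.exp 1 = Real.exp 2 := by rw [← Real.exp_add]; norm_num
  -- positivity of r's
  have hr₁ : 1 < r₁ := by
    rcases h₁ with ⟨h, _⟩ | ⟨h, _⟩
    · linarith
    · exact h
  have hr₂ : 1 < r₂ := by
    rcases h₂ with ⟨h, _⟩ | ⟨h, _⟩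
    · linarith
    · exact h
  have hr₁0 : (0:ℝ) < r₁ := by linarith
  have hr₂0 : (0:ℝ) < r₂ := by linarith
  have hL1 : 0 < Real.log r₁ := Real.log_pos hr₁
  have hL2 : 0 < Real.log r₂ := Real.log_pos hr₂
  -- unpack the intersection
  obtain ⟨x, ⟨hx1, hx2⟩, hx3, hx4⟩ := hint
  rw [Real.log_div ha₁.ne' hr₁0.ne'] at hx1
  rw [Real.log_mul ha₁.ne' hr₁0.ne'] at hx2
  rw [Real.log_div ha₂.ne' hr₂0.ne'] at hx3
  rw [Real.log_mul ha₂.ne' hr₂0.ne'] at hx4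
  have hgap₁ : Real.log a₁ - Real.log a₂ < Real.log r₁ + Real.log r₂ := by linarith
  have hgap₂ : Real.log a₂ - Real.log a₁ < Real.log r₁ + Real.log r₂ := by linarith
  -- a₁ < a₂ * r₁ * r₂
  have ha1lt : a₁ < a₂ * r₁ * r₂ := by
    rw [← Real.log_lt_log_iff ha₁ (by positivity)]
    rw [Real.log_mul (by positivity) hr₂0.ne', Real.log_mul ha₂.ne' hr₁0.ne']
    linarith
  -- key inequality
  have key : 2 * Real.log r₂ ≤ (3 * M - 1) * Real.log r₁ := by
    rcases h₂ with ⟨her2, hd2l, _⟩ | ⟨_, hre2, hd2l, _⟩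
    · -- r₂ large
      have hL2gt1 : 1 < Real.log r₂ := (Real.lt_log_iff_exp_lt hr₂0).mpr her2
      rcases h₁ with ⟨her1, _, hd1u⟩ | ⟨_, hre1, _, hd1u⟩
      · -- both large
        have hL1gt1 : 1 < Real.log r₁ := (Real.lt_log_iff_exp_lt hr₁0).mpr her1
        have hpow : (0:ℝ) < r₁ ^ γ := Real.rpow_pos_of_pos hr₁0 γ
        have h5 : a₂ * r₂ ^ (2:ℕ) < lam * (a₂ * r₁ * r₂) * r₁ ^ γ := by
          have : lam * a₁ * r₁ ^ γ < lam * (a₂ * r₁ * r₂) * r₁ ^ γ := by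
            apply mul_lt_mul_of_pos_right _ hpow
            exact mul_lt_mul_of_pos_left ha1lt hlampos
          linarith
        have hr2lt : r₂ < lam * r₁ * r₁ ^ γ := by
          have hp : a₂ * r₂ ^ (2:ℕ) = (a₂ * r₂) * r₂ := by ring
          have hq : lam * (a₂ * r₁ * r₂) * r₁ ^ γ = (a₂ * r₂) * (lam * r₁ * r₁ ^ γ) := by ring
          have h6 : (a₂ * r₂) * r₂ < (a₂ * r₂) * (lam * r₁ * r₁ ^ γ) := by
            rw [← hp, ← hq]; exact h5
          exact (mul_lt_mul_iff_right₀ (by positivity)).mp h6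
        have h7 := Real.log_lt_log hr₂0 hr2lt
        rw [Real.log_mul (by positivity) hpow.ne', Real.log_mul hlampos.ne' hr₁0.ne',
          Real.log_rpow hr₁0] at h7
        linarith [mul_nonneg (by linarith : (0:ℝ) ≤ Real.log lam)
            (by linarith : (0:ℝ) ≤ Real.log r₁ - 1),
          mul_nonneg (by linarith : (0:ℝ) ≤ M - 1) hL1.le,
          mul_le_mul_of_nonneg_right hM1 hL1.le]
      · -- r₂ large, r₁ small
        have he2 : (0:ℝ) < Real.exp 2 := Real.exp_pos 2
        have h5 : a₂ * r₂ ^ (2:ℕ) < lam * (a₂ * r₁ * r₂) * Real.exp 2 * Real.log r₁ := by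
          have : lam * a₁ * Real.exp 2 * Real.log r₁ <
              lam * (a₂ * r₁ * r₂) * Real.exp 2 * Real.log r₁ := by
            apply mul_lt_mul_of_pos_right _ hL1
            apply mul_lt_mul_of_pos_right _ he2
            exact mul_lt_mul_of_pos_left ha1lt hlampos
          linarith
        have hmono : lam * (a₂ * r₁ * r₂) * Real.exp 2 * Real.log r₁ ≤
            (a₂ * r₂) * (lam * Real.exp 3 * Real.log r₁) := by
          have hnn : 0 ≤ (Real.exp 1 - r₁) * (lam * a₂ * r₂ * Real.exp 2 * Real.log r₁) :=
            mul_nonneg (by linarith) (by positivity)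
          have heq : (a₂ * r₂) * (lam * Real.exp 3 * Real.log r₁) =
              lam * (a₂ * r₁ * r₂) * Real.exp 2 * Real.log r₁ +
              (Real.exp 1 - r₁) * (lam * a₂ * r₂ * Real.exp 2 * Real.log r₁) := by
            rw [← hee]; ring
          linarith
        have hr2lt : r₂ < lam * Real.exp 3 * Real.log r₁ := by
          have hp : a₂ * r₂ ^ (2:ℕ) = (a₂ * r₂) * r₂ := by ring
          have h6 : (a₂ * r₂) * r₂ < (a₂ * r₂) * (lam * Real.exp 3 * Real.log r₁) := by
            rw [← hp]; linarith
          exact (mul_lt_mul_iff_right₀ (by positivity)).mp h6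
        have h7 : Real.log r₂ ≤ r₂ - 1 := Real.log_le_sub_one_of_pos hr₂0
        linarith [mul_nonneg (by linarith : (0:ℝ) ≤ lam * Real.exp 3 - 1) hL1.le,
          mul_nonneg (by linarith : (0:ℝ) ≤ M - lam * Real.exp 3) hL1.le]
    · -- r₂ small
      have hL2le1 : Real.log r₂ ≤ 1 := by
        have h := Real.log_le_log hr₂0 hre2
        simpa [Real.log_exp] using h
      rcases h₁ with ⟨her1, _, hd1u⟩ | ⟨_, hre1, _, hd1u⟩
      · -- r₁ large
        have hL1gt1 : 1 < Real.log r₁ := (Real.lt_log_iff_exp_lt hr₁0).mpr her1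
        linarith [mul_nonneg (by linarith : (0:ℝ) ≤ 3 * M - 3) hL1.le]
      · -- both small
        have he2 : (0:ℝ) < Real.exp 2 := Real.exp_pos 2
        have h5 : a₂ * Real.exp 2 * Real.log r₂ <
            lam * (a₂ * r₁ * r₂) * Real.exp 2 * Real.log r₁ := by
          have : lam * a₁ * Real.exp 2 * Real.log r₁ <
              lam * (a₂ * r₁ * r₂) * Real.exp 2 * Real.log r₁ := by
            apply mul_lt_mul_of_pos_right _ hL1
            apply mul_lt_mul_of_pos_right _ he2
            exact mul_lt_mul_of_pos_left ha1lt hlampos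
          linarith
        have hr1r2 : r₁ * r₂ ≤ Real.exp 2 := by nlinarith
        have hmono : lam * (a₂ * r₁ * r₂) * Real.exp 2 * Real.log r₁ ≤
            (a₂ * Real.exp 2) * (lam * Real.exp 2 * Real.log r₁) := by
          have hnn : 0 ≤ (Real.exp 2 - r₁ * r₂) * (lam * a₂ * Real.exp 2 * Real.log r₁) :=
            mul_nonneg (by linarith) (by positivity)
          have heq : (a₂ * Real.exp 2) * (lam * Real.exp 2 * Real.log r₁) =
              lam * (a₂ * r₁ * r₂) * Real.exp 2 * Real.log r₁ +
              (Real.exp 2 - r₁ * r₂) * (lam * a₂ * Real.exp 2 * Real.log r₁) := by ring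
          linarith
        have hlog2 : Real.log r₂ < lam * Real.exp 2 * Real.log r₁ := by
          have h6 : (a₂ * Real.exp 2) * Real.log r₂ <
              (a₂ * Real.exp 2) * (lam * Real.exp 2 * Real.log r₁) := by
            have hp : a₂ * Real.exp 2 * Real.log r₂ = (a₂ * Real.exp 2) * Real.log r₂ := by ring
            linarith
          exact (mul_lt_mul_iff_right₀ (by positivity)).mp h6
        have he23 : Real.exp 2 ≤ Real.exp 3 := Real.exp_le_exp.mpr (by norm_num)
        linarith [mul_nonneg (by linarith : (0:ℝ) ≤ lam * Real.exp 3 - 1) hL1.le,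
          mul_nonneg (by linarith : (0:ℝ) ≤ M - lam * Real.exp 3) hL1.le,
          mul_le_mul_of_nonneg_right (mul_le_mul_of_nonneg_left he23 hlampos.le) hL1.le]
  -- conclusion
  intro y hy
  obtain ⟨hy1, hy2⟩ := hy
  rw [Real.log_div ha₂.ne' hr₂0.ne'] at hy1
  rw [Real.log_mul ha₂.ne' hr₂0.ne'] at hy2
  constructor
  · linarith
  · linarith
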